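/- arXiv:1708.07691 — 6 statements merged into one kernel-verified Lean document; each statement's English description precedes it below -/
import Mathlib

section
/- Let h', h'' be independent exponential random variables with unit mean, and let θ ≥ 0. Define V₁ = max(h',h'') − θ·min(h',h''). Then for v > 0, the CDF of V₁ is F(v) = 1 − (2/(1+θ))e^{−v} + ((1−θ)/(1+θ))e^{−2v/(1−θ)} if 0 ≤ θ < 1, and F(v) = 1 − (2/(1+θ))e^{−v} if θ ≥ 1. -/
open MeasureTheory ProbabilityTheory Real

open Set

instance : IsProbabilityMeasure (expMeasure 1) := isProbabilityMeasure_expMeasure one_pos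

lemma expM_apply {s : Set ℝ} (hs : MeasurableSet s) :
    (expMeasure 1) s = ∫⁻ y in s, exponentialPDF 1 y := by
  rw [expMeasure, gammaMeasure, withDensity_apply _ hs]; rfl

lemma expM_Iic (x : ℝ) :
    (expMeasure 1) (Iic x) = ENNReal.ofReal (if 0 ≤ x then 1 - exp (-x) else 0) := by
  rw [expM_apply measurableSet_Iic, lintegral_exponentialPDF_eq_antiDeriv one_pos]
  simp

lemma expM_Icc {a : ℝ} (ha : 0 ≤ a) (b : ℝ) :
    (expMeasure 1) (Icc a b) = ENNReal.ofReal (exp (-a) - exp (-b)) := by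
  rcases le_or_gt a b with hab | hab
  · have h1 : Icc a b = Iic b \ Iio a := by
      ext x; simp [Set.mem_diff, and_comm, not_lt]
    have h2 : (expMeasure 1) (Iio a) = (expMeasure 1) (Iic a) := by
      rw [← Iio_union_right, measure_union (by simp) (measurableSet_singleton a),
        show (expMeasure 1) {a} = 0 from
          withDensity_absolutelyContinuous volume _ (measure_singleton a), add_zero]
    rw [h1, measure_diff (Iio_subset_Iic_self.trans (Iic_subset_Iic.mpr hab))
      measurableSet_Iio.nullMeasurableSet (measure_ne_top _ _), h2, expM_Iic, expM_Iic,
      if_pos ha, if_pos (ha.trans hab),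
      ← ENNReal.ofReal_sub _ (by nlinarith [Real.exp_le_one_iff.mpr (neg_nonpos.mpr ha)])]
    ring_nf
  · rw [Icc_eq_empty hab.not_ge, measure_empty, Eq.comm, ENNReal.ofReal_eq_zero, sub_nonpos]
    exact exp_le_exp.mpr (by linarith)

lemma expM_Iio_zero : (expMeasure 1) (Iio 0) = 0 := by
  refine le_antisymm ?_ zero_le
  calc (expMeasure 1) (Iio 0) ≤ (expMeasure 1) (Iic 0) := measure_mono Iio_subset_Iic_self
  _ = 0 := by rw [expM_Iic]; simp

lemma halfA (θ v : ℝ) :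
    (expMeasure 1).prod (expMeasure 1) {p : ℝ × ℝ | p.1 ≤ p.2 ∧ p.2 ≤ v + θ * p.1}
      = ∫⁻ x in Ici 0, ENNReal.ofReal (exp (-x) * (exp (-x) - exp (-(v + θ * x)))) := by
  have hA : MeasurableSet {p : ℝ × ℝ | p.1 ≤ p.2 ∧ p.2 ≤ v + θ * p.1} := by
    refine (measurableSet_le measurable_fst measurable_snd).inter
      (measurableSet_le measurable_snd (measurable_const.add (measurable_fst.const_mul θ)))
  rw [Measure.prod_apply hA]
  have hslice : ∀ x : ℝ, (Prod.mk x ⁻¹' {p : ℝ × ℝ | p.1 ≤ p.2 ∧ p.2 ≤ v + θ * p.1})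
      = Icc x (v + θ * x) := fun x => rfl
  simp only [hslice]
  have h0 : ∀ᵐ x ∂(expMeasure 1), 0 ≤ x := by
    rw [ae_iff]
    have : {a : ℝ | ¬ 0 ≤ a} = Iio 0 := by ext; simp [not_le]
    rw [this]; exact expM_Iio_zero
  have hae : ∀ᵐ x ∂(expMeasure 1), (expMeasure 1) (Icc x (v + θ * x))
      = ENNReal.ofReal (exp (-x) - exp (-(v + θ * x))) := by
    filter_upwards [h0] with x hx
    exact expM_Icc hx _
  rw [lintegral_congr_ae hae]
  have hg : Measurable fun x : ℝ => ENNReal.ofReal (exp (-x) - exp (-(v + θ * x))) := by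
    fun_prop
  have hpdf : Measurable (exponentialPDF 1) := (measurable_exponentialPDFReal 1).ennreal_ofReal
  rw [show expMeasure 1 = volume.withDensity (exponentialPDF 1) from rfl,
    lintegral_withDensity_eq_lintegral_mul volume hpdf hg]
  rw [← lintegral_add_compl _ (measurableSet_Ici (a := (0:ℝ)))]
  have h2 : ∫⁻ x in (Ici (0:ℝ))ᶜ,
      (exponentialPDF 1 * fun x => ENNReal.ofReal (exp (-x) - exp (-(v + θ * x)))) x = 0 := by
    rw [setLIntegral_congr_fun (measurableSet_Ici (a := (0:ℝ))).compl
      (fun x hx => ?_), lintegral_zero]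
    have : x < 0 := by simpa [not_le] using hx
    simp [exponentialPDF_of_neg this]
  rw [h2, add_zero]
  refine setLIntegral_congr_fun measurableSet_Ici (fun x hx => ?_)
  have hx : (0:ℝ) ≤ x := hx
  simp only [Pi.mul_apply, exponentialPDF_of_nonneg hx, one_mul]
  rw [← ENNReal.ofReal_mul (exp_nonneg _)]


lemma intExpIoi (c : ℝ) (hc : 0 < c) : ∫ x in Set.Ioi (0:ℝ), exp (-(c*x)) = 1/c := by
  rw [show (fun x => exp (-(c*x))) = (fun x => (fun u => exp (-u)) (c * x)) by rfl]
  rw [MeasureTheory.integral_comp_mul_left_Ioi (fun u => exp (-u)) 0 hc]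
  simp [integral_exp_neg_Ioi, mul_comm, integral_exp_Iic_zero]

lemma intOnIoi (c : ℝ) (hc : 0 < c) : IntegrableOn (fun x => exp (-(c*x))) (Set.Ioi (0:ℝ)) := by
  simpa [neg_mul] using exp_neg_integrableOn_Ioi (0:ℝ) hc

lemma intExpItv (c a : ℝ) (hc : c ≠ 0) :
    ∫ x in (0:ℝ)..a, exp (-(c*x)) = (1 - exp (-(c*a)))/c := by
  have hder : ∀ x ∈ Set.uIcc (0:ℝ) a, HasDerivAt (fun x => -exp (-(c*x))/c) (exp (-(c*x))) x := by
    intro x _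
    have h1 : HasDerivAt (fun x : ℝ => -(c*x)) (-c) x := by
      simpa [neg_mul] using ((hasDerivAt_id x).const_mul (-c))
    have h2 := (h1.exp.neg).div_const c
    exact h2.congr_deriv (by field_simp)
  have hint : IntervalIntegrable (fun x => exp (-(c*x))) volume 0 a := by
    apply Continuous.intervalIntegrable; fun_prop
  rw [intervalIntegral.integral_eq_sub_of_hasDerivAt hder hint]
  field_simp
  simp only [mul_zero, neg_zero, Real.exp_zero]; ring

lemma lint_ge_one (θ v : ℝ) (hθ1 : 1 ≤ θ) (hv : 0 < v) :
    ∫⁻ x in Ici (0:ℝ), ENNReal.ofReal (exp (-x) * (exp (-x) - exp (-(v + θ * x))))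
      = ENNReal.ofReal (1/2 - exp (-v) * (1/(1+θ))) ∧ 0 ≤ 1/2 - exp (-v) * (1/(1+θ)) := by
  have hθ0 : (0:ℝ) < 1 + θ := by linarith
  have hkey : ∀ x : ℝ, exp (-x) * (exp (-x) - exp (-(v + θ * x)))
      = exp (-(2*x)) - exp (-v) * exp (-((1+θ)*x)) := by
    intro x; rw [mul_sub, ← Real.exp_add, ← Real.exp_add, ← Real.exp_add]; ring_nf
  have hnn : ∀ x ∈ Ici (0:ℝ), 0 ≤ exp (-x) * (exp (-x) - exp (-(v + θ * x))) := by
    intro x hx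
    have : x ≤ v + θ * x := by nlinarith [mem_Ici.mp hx]
    have h2 := Real.exp_le_exp.mpr (neg_le_neg this)
    have h3 := Real.exp_nonneg (-x)
    nlinarith
  have hInt : IntegrableOn (fun x => exp (-x) * (exp (-x) - exp (-(v + θ * x)))) (Ici (0:ℝ)) := by
    rw [integrableOn_Ici_iff_integrableOn_Ioi]
    simp only [hkey]
    exact (intOnIoi 2 two_pos).sub ((intOnIoi (1+θ) hθ0).const_mul _)
  have hval : ∫ x in Ici (0:ℝ), exp (-x) * (exp (-x) - exp (-(v + θ * x)))
      = 1/2 - exp (-v) * (1/(1+θ)) := by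
    rw [integral_Ici_eq_integral_Ioi]
    simp only [hkey]
    rw [integral_sub (intOnIoi 2 two_pos) ((intOnIoi (1+θ) hθ0).const_mul _),
      MeasureTheory.integral_const_mul, intExpIoi 2 two_pos, intExpIoi (1+θ) hθ0]
  constructor
  · rw [← hval, ← ofReal_integral_eq_lintegral_ofReal hInt
      ((ae_restrict_iff' measurableSet_Ici).mpr (ae_of_all _ hnn))]
  · rw [← hval]
    exact setIntegral_nonneg measurableSet_Ici hnn

lemma lint_lt_one (θ v : ℝ) (hθ : 0 ≤ θ) (hθ1 : θ < 1) (hv : 0 < v) :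
    ∫⁻ x in Ici (0:ℝ), ENNReal.ofReal (exp (-x) * (exp (-x) - exp (-(v + θ * x))))
      = ENNReal.ofReal ((1 - exp (-(2*(v/(1-θ)))))/2
          - exp (-v) * ((1 - exp (-((1+θ)*(v/(1-θ)))))/(1+θ)))
      ∧ 0 ≤ (1 - exp (-(2*(v/(1-θ)))))/2
          - exp (-v) * ((1 - exp (-((1+θ)*(v/(1-θ)))))/(1+θ)) := by
  set a := v/(1-θ) with ha_def
  have h1θ : (0:ℝ) < 1 - θ := by linarith
  have hθ0 : (0:ℝ) < 1 + θ := by linarith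
  have ha : 0 < a := div_pos hv h1θ
  have hva : (1-θ) * a = v := by rw [ha_def]; field_simp
  have hkey : ∀ x : ℝ, exp (-x) * (exp (-x) - exp (-(v + θ * x)))
      = exp (-(2*x)) - exp (-v) * exp (-((1+θ)*x)) := by
    intro x; rw [mul_sub, ← Real.exp_add, ← Real.exp_add, ← Real.exp_add]; ring_nf
  have hnn : ∀ x ∈ Icc (0:ℝ) a, 0 ≤ exp (-x) * (exp (-x) - exp (-(v + θ * x))) := by
    intro x hx
    obtain ⟨hx0, hxa⟩ := hx
    have hxv : x ≤ v + θ * x := by nlinarith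
    have h2 := Real.exp_le_exp.mpr (neg_le_neg hxv)
    have h3 := Real.exp_nonneg (-x)
    nlinarith
  have hcont : Continuous fun x : ℝ => exp (-x) * (exp (-x) - exp (-(v + θ * x))) := by fun_prop
  have hsplit : Ici (0:ℝ) = Icc 0 a ∪ Ioi a := (Icc_union_Ioi_eq_Ici ha.le).symm
  rw [hsplit, lintegral_union measurableSet_Ioi
    ((Set.Iic_disjoint_Ioi le_rfl).mono_left Icc_subset_Iic_self)]
  have hIoi : ∫⁻ x in Ioi a, ENNReal.ofReal (exp (-x) * (exp (-x) - exp (-(v + θ * x)))) = 0 := by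
    rw [setLIntegral_congr_fun measurableSet_Ioi (fun x hx => ?_), lintegral_zero]
    have hax : a < x := hx
    have hxv : v + θ * x ≤ x := by nlinarith
    have h2 := Real.exp_le_exp.mpr (neg_le_neg hxv)
    have h3 := Real.exp_nonneg (-x)
    rw [ENNReal.ofReal_eq_zero]
    nlinarith
  rw [hIoi, add_zero]
  have hval : ∫ x in Icc (0:ℝ) a, exp (-x) * (exp (-x) - exp (-(v + θ * x)))
      = (1 - exp (-(2*a)))/2 - exp (-v) * ((1 - exp (-((1+θ)*a)))/(1+θ)) := by
    rw [integral_Icc_eq_integral_Ioc, ← intervalIntegral.integral_of_le ha.le]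
    simp only [hkey]
    rw [intervalIntegral.integral_sub (by apply Continuous.intervalIntegrable; fun_prop)
      (by apply Continuous.intervalIntegrable; fun_prop),
      intervalIntegral.integral_const_mul, intExpItv 2 a two_ne_zero,
      intExpItv (1+θ) a hθ0.ne']
  constructor
  · rw [← hval, ← ofReal_integral_eq_lintegral_ofReal (hcont.integrableOn_Icc)
      ((ae_restrict_iff' measurableSet_Icc).mpr (ae_of_all _ hnn))]
  · rw [← hval]
    exact setIntegral_nonneg measurableSet_Icc hnn


/-- CDF of `V₁ = max(h',h'') − θ·min(h',h'')` for i.i.d. unit-mean exponential `h', h''`. -/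
theorem cdf_V1 {Ω : Type*} [MeasureSpace Ω] [IsProbabilityMeasure (ℙ : Measure Ω)]
    (h' h'' : Ω → ℝ) (hm' : Measurable h') (hm'' : Measurable h'')
    (hind : IndepFun h' h'' ℙ)
    (hd' : Measure.map h' ℙ = expMeasure 1)
    (hd'' : Measure.map h'' ℙ = expMeasure 1)
    (θ : ℝ) (hθ : 0 ≤ θ) (v : ℝ) (hv : 0 < v) :
    (ℙ {ω | max (h' ω) (h'' ω) - θ * min (h' ω) (h'' ω) ≤ v}).toReal =
      if θ < 1 then
        1 - (2 / (1 + θ)) * Real.exp (-v) + ((1 - θ) / (1 + θ)) * Real.exp (-2 * v / (1 - θ))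
      else
        1 - (2 / (1 + θ)) * Real.exp (-v) := by

  have hθ0 : (0:ℝ) < 1 + θ := by linarith
  have hmap : Measure.map (fun ω => (h' ω, h'' ω)) ℙ = (expMeasure 1).prod (expMeasure 1) := by
    refine ((ProbabilityTheory.indepFun_iff_map_prod_eq_prod_map_map
      hm'.aemeasurable hm''.aemeasurable).mp hind).trans ?_
    rw [hd', hd'']
  have hTmeas : MeasurableSet {p : ℝ × ℝ | max p.1 p.2 - θ * min p.1 p.2 ≤ v} :=
    measurableSet_le ((measurable_fst.max measurable_snd).sub
      ((measurable_fst.min measurable_snd).const_mul θ)) measurable_const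
  have hAmeas : MeasurableSet {p : ℝ × ℝ | p.1 ≤ p.2 ∧ p.2 ≤ v + θ * p.1} :=
    (measurableSet_le measurable_fst measurable_snd).inter
      (measurableSet_le measurable_snd (measurable_const.add (measurable_fst.const_mul θ)))
  have hBmeas : MeasurableSet {p : ℝ × ℝ | p.2 ≤ p.1 ∧ p.1 ≤ v + θ * p.2} :=
    (measurableSet_le measurable_snd measurable_fst).inter
      (measurableSet_le measurable_fst (measurable_const.add (measurable_snd.const_mul θ)))
  have hP : ℙ {ω | max (h' ω) (h'' ω) - θ * min (h' ω) (h'' ω) ≤ v}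
      = (expMeasure 1).prod (expMeasure 1) {p : ℝ × ℝ | max p.1 p.2 - θ * min p.1 p.2 ≤ v} := by
    rw [← hmap, Measure.map_apply (hm'.prodMk hm'') hTmeas]
    rfl
  have hTAB : {p : ℝ × ℝ | max p.1 p.2 - θ * min p.1 p.2 ≤ v}
      = {p : ℝ × ℝ | p.1 ≤ p.2 ∧ p.2 ≤ v + θ * p.1}
        ∪ {p : ℝ × ℝ | p.2 ≤ p.1 ∧ p.1 ≤ v + θ * p.2} := by
    ext p
    simp only [mem_setOf_eq, mem_union]
    rcases le_total p.1 p.2 with h | h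
    · rw [max_eq_right h, min_eq_left h]
      constructor
      · intro hle; exact Or.inl ⟨h, by linarith⟩
      · rintro (⟨h1, h2⟩ | ⟨h1, h2⟩)
        · linarith
        · have hpe : p.1 = p.2 := le_antisymm h h1
          have hte : θ * p.1 = θ * p.2 := by rw [hpe]
          linarith
    · rw [max_eq_left h, min_eq_right h]
      constructor
      · intro hle; exact Or.inr ⟨h, by linarith⟩
      · rintro (⟨h1, h2⟩ | ⟨h1, h2⟩)
        · have hpe : p.1 = p.2 := le_antisymm h1 h
          have hte : θ * p.1 = θ * p.2 := by rw [hpe]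
          linarith
        · linarith
  have hdiagmeas : MeasurableSet {p : ℝ × ℝ | p.1 = p.2} :=
    measurableSet_eq_fun measurable_fst measurable_snd
  have hdiag : (expMeasure 1).prod (expMeasure 1) {p : ℝ × ℝ | p.1 = p.2} = 0 := by
    rw [Measure.prod_apply hdiagmeas]
    have hsl : ∀ x : ℝ, (Prod.mk x ⁻¹' {p : ℝ × ℝ | p.1 = p.2}) = {x} := by
      intro x; ext y; simp [eq_comm]
    simp only [hsl]
    simp [show ∀ x : ℝ, (expMeasure 1) {x} = 0 from fun x =>
      withDensity_absolutelyContinuous volume _ (measure_singleton x)]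
  have hABnull : (expMeasure 1).prod (expMeasure 1)
      ({p : ℝ × ℝ | p.1 ≤ p.2 ∧ p.2 ≤ v + θ * p.1}
        ∩ {p : ℝ × ℝ | p.2 ≤ p.1 ∧ p.1 ≤ v + θ * p.2}) = 0 := by
    refine measure_mono_null (fun p hp => ?_) hdiag
    exact le_antisymm hp.1.1 hp.2.1
  have hBA : (expMeasure 1).prod (expMeasure 1) {p : ℝ × ℝ | p.2 ≤ p.1 ∧ p.1 ≤ v + θ * p.2}
      = (expMeasure 1).prod (expMeasure 1) {p : ℝ × ℝ | p.1 ≤ p.2 ∧ p.2 ≤ v + θ * p.1} := by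
    conv_lhs => rw [← Measure.prod_swap]
    rw [Measure.map_apply measurable_swap hBmeas]
    congr 1
  have hT2 : (expMeasure 1).prod (expMeasure 1) {p : ℝ × ℝ | max p.1 p.2 - θ * min p.1 p.2 ≤ v}
      = 2 * (expMeasure 1).prod (expMeasure 1) {p : ℝ × ℝ | p.1 ≤ p.2 ∧ p.2 ≤ v + θ * p.1} := by
    rw [hTAB]
    have hkey := measure_union_add_inter (μ := (expMeasure 1).prod (expMeasure 1))
      {p : ℝ × ℝ | p.1 ≤ p.2 ∧ p.2 ≤ v + θ * p.1} hBmeas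
    rw [hABnull, add_zero, hBA] at hkey
    rw [hkey, two_mul]
  rw [hP, hT2, halfA θ v]
  rcases lt_or_ge θ 1 with hθ1 | hθ1
  · rw [if_pos hθ1]
    obtain ⟨hval, hpos⟩ := lint_lt_one θ v hθ hθ1 hv
    rw [hval, ← ENNReal.ofReal_ofNat, ← ENNReal.ofReal_mul (by norm_num),
      ENNReal.toReal_ofReal (mul_nonneg (by norm_num) hpos)]
    have h1θ : (0:ℝ) < 1 - θ := by linarith
    have he : exp (-v) * exp (-((1+θ)*(v/(1-θ)))) = exp (-2*v/(1-θ)) := by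
      rw [← Real.exp_add]; congr 1; field_simp; ring
    have he2 : exp (-(2*(v/(1-θ)))) = exp (-2*v/(1-θ)) := by
      congr 1; ring
    rw [he2, ← he]
    field_simp
    ring
  · rw [if_neg (not_lt.mpr hθ1)]
    obtain ⟨hval, hpos⟩ := lint_ge_one θ v hθ1 hv
    rw [hval, ← ENNReal.ofReal_ofNat, ← ENNReal.ofReal_mul (by norm_num),
      ENNReal.toReal_ofReal (mul_nonneg (by norm_num) hpos)]
    field_simp
end

section
/- Let h', h'' be independent exponential random variables with unit mean, θ ≥ 0 and μ ∈ [0,1]. Define V₂ = min(h',h'') − θμ·max(h',h''). Then for v > 0, the CDF of V₂ is F(v) = 1 − ((1−θμ)/(1+θμ))e^{−2v/(1−θμ)} if 0 ≤ θμ < 1, and F(v) = 1 identically if θμ ≥ 1. -/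
open MeasureTheory ProbabilityTheory Real

lemma expMeasure_one_withDensity :
    expMeasure 1 = MeasureTheory.volume.withDensity (exponentialPDF 1) := rfl

lemma integral_exp_neg_mul_Ioi' {c : ℝ} (hc : 0 < c) (b : ℝ) :
    ∫ x in Set.Ioi b, Real.exp (-(c * x)) = Real.exp (-(c * b)) / c := by
  have h := integral_comp_mul_left_Ioi (fun y => Real.exp (-y)) b hc
  simp only [smul_eq_mul] at h
  rw [h, integral_exp_neg_Ioi, inv_mul_eq_div]

lemma expMeasure_one_Iic {x : ℝ} (hx : 0 ≤ x) :
    expMeasure 1 (Set.Iic x) = ENNReal.ofReal (1 - Real.exp (-x)) := by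
  rw [expMeasure_one_withDensity, withDensity_apply _ measurableSet_Iic,
    lintegral_exponentialPDF_eq_antiDeriv one_pos x]
  simp [hx]

lemma expMeasure_one_Iio_zero : expMeasure 1 (Set.Iio 0) = 0 := by
  rw [expMeasure_one_withDensity, withDensity_apply _ measurableSet_Iio]
  exact lintegral_exponentialPDF_of_nonpos le_rfl

lemma expMeasure_one_singleton (x : ℝ) : expMeasure 1 {x} = 0 := by
  rw [expMeasure_one_withDensity]
  exact withDensity_absolutelyContinuous _ _ (measure_singleton x)

lemma expMeasure_one_Ioc {c d : ℝ} (hc : 0 ≤ c) :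
    expMeasure 1 (Set.Ioc c d) = ENNReal.ofReal (Real.exp (-c) - Real.exp (-d)) := by
  haveI : IsProbabilityMeasure (expMeasure 1) := isProbabilityMeasure_expMeasure one_pos
  rcases le_or_gt c d with h | h
  · have hd : 0 ≤ d := hc.trans h
    have hset : Set.Ioc c d = Set.Iic d \ Set.Iic c := by
      ext y
      simp only [Set.mem_Ioc, Set.mem_diff, Set.mem_Iic, not_le]
      exact and_comm
    rw [hset, measure_diff (Set.Iic_subset_Iic.mpr h) measurableSet_Iic.nullMeasurableSet
        (measure_ne_top _ _), expMeasure_one_Iic hd, expMeasure_one_Iic hc,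
      ← ENNReal.ofReal_sub _ (by simp [Real.exp_le_one_iff.mpr (by linarith : -c ≤ 0)])]
    congr 1
    ring
  · rw [Set.Ioc_eq_empty (not_lt.mpr h.le), measure_empty]
    symm
    apply ENNReal.ofReal_of_nonpos
    have : Real.exp (-c) < Real.exp (-d) := Real.exp_lt_exp.mpr (by linarith)
    linarith

/-- CDF of `V₂ = min(h',h'') − θμ·max(h',h'')` for i.i.d. unit-mean exponential `h', h''`. -/
theorem cdf_V2 {Ω : Type*} [MeasureSpace Ω] [IsProbabilityMeasure (ℙ : Measure Ω)]
    (h' h'' : Ω → ℝ) (hm' : Measurable h') (hm'' : Measurable h'')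
    (hind : IndepFun h' h'' ℙ)
    (hd' : Measure.map h' ℙ = expMeasure 1)
    (hd'' : Measure.map h'' ℙ = expMeasure 1)
    (θ μ : ℝ) (hθ : 0 ≤ θ) (hμ0 : 0 ≤ μ) (hμ1 : μ ≤ 1) (v : ℝ) (hv : 0 < v) :
    (ℙ {ω | min (h' ω) (h'' ω) - θ * μ * max (h' ω) (h'' ω) ≤ v}).toReal =
      if θ * μ < 1 then
        1 - ((1 - θ * μ) / (1 + θ * μ)) * Real.exp (-2 * v / (1 - θ * μ))
      else 1 := by
  set a := θ * μ with ha_def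
  have ha0 : 0 ≤ a := mul_nonneg hθ hμ0
  haveI hprob : IsProbabilityMeasure (expMeasure 1) := isProbabilityMeasure_expMeasure one_pos
  set ν := expMeasure 1 with hν
  by_cases hlt : a < 1
  · -- main case
    rw [if_pos hlt]
    have h1a : (0:ℝ) < 1 - a := by linarith
    set b := v / (1 - a) with hb_def
    have hb0 : 0 < b := div_pos hv h1a
    have hbv : b * (1 - a) = v := div_mul_cancel₀ v (by linarith)
    -- measurability
    have hfm : Measurable (fun p : ℝ × ℝ => min p.1 p.2 - a * max p.1 p.2) :=
      (measurable_fst.min measurable_snd).sub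
        (measurable_const.mul (measurable_fst.max measurable_snd))
    have hE2 : MeasurableSet {p : ℝ × ℝ | min p.1 p.2 - a * max p.1 p.2 ≤ v} :=
      measurableSet_le hfm measurable_const
    have hmap : Measure.map (fun ω => (h' ω, h'' ω)) ℙ = ν.prod ν := by
      rw [hν, show (expMeasure 1).prod (expMeasure 1)
        = (Measure.map h' ℙ).prod (Measure.map h'' ℙ) by rw [hd', hd'']]
      exact (indepFun_iff_map_prod_eq_prod_map_map hm'.aemeasurable hm''.aemeasurable).mp hind
    have key : ℙ {ω | min (h' ω) (h'' ω) - θ * μ * max (h' ω) (h'' ω) ≤ v}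
        = (ν.prod ν) {p : ℝ × ℝ | min p.1 p.2 - a * max p.1 p.2 ≤ v} := by
      rw [← hmap, Measure.map_apply (hm'.prodMk hm'') hE2]
      rfl
    -- the complement set
    set A : Set (ℝ × ℝ) := {p | p.2 ≤ p.1 ∧ v + a * p.1 < p.2} with hA_def
    have hAmeas : MeasurableSet A :=
      (measurableSet_le measurable_snd measurable_fst).inter
        (measurableSet_lt (measurable_const.add (measurable_const.mul measurable_fst))
          measurable_snd)
    have hC : {p : ℝ × ℝ | min p.1 p.2 - a * max p.1 p.2 ≤ v}ᶜ = A ∪ Prod.swap ⁻¹' A := by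
      ext p
      simp only [Set.mem_compl_iff, Set.mem_setOf_eq, not_le, Set.mem_union, Set.mem_preimage,
        hA_def, Prod.fst_swap, Prod.snd_swap]
      constructor
      · intro h
        rcases le_total p.2 p.1 with hle | hle
        · left
          refine ⟨hle, ?_⟩
          rw [min_eq_right hle, max_eq_left hle] at h
          linarith
        · right
          refine ⟨hle, ?_⟩
          rw [min_eq_left hle, max_eq_right hle] at h
          linarith
      · rintro (⟨h1, h2⟩ | ⟨h1, h2⟩)
        · rw [min_eq_right h1, max_eq_left h1]; linarith
        · rw [min_eq_left h1, max_eq_right h1]; linarith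
    -- diagonal is null
    have hdiag : (ν.prod ν) {p : ℝ × ℝ | p.1 = p.2} = 0 := by
      have hmd : MeasurableSet {p : ℝ × ℝ | p.1 = p.2} :=
        measurableSet_eq_fun measurable_fst measurable_snd
      rw [Measure.prod_apply hmd]
      have hz2 : ∀ x : ℝ, ν {x} = 0 := fun x => expMeasure_one_singleton x
      have hz : ∀ x : ℝ, ν (Prod.mk x ⁻¹' {p : ℝ × ℝ | p.1 = p.2}) = 0 := by
        intro x
        have hseq : Prod.mk x ⁻¹' {p : ℝ × ℝ | p.1 = p.2} = {x} := by
          ext y; simp [eq_comm]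
        rw [hseq]
        exact hz2 x
      simp [hz, hz2]
    have hover : (ν.prod ν) (A ∩ Prod.swap ⁻¹' A) = 0 := by
      refine measure_mono_null ?_ hdiag
      rintro ⟨x, y⟩ ⟨⟨hxy, -⟩, ⟨hyx, -⟩⟩
      exact le_antisymm hyx hxy
    have hswap : (ν.prod ν) (Prod.swap ⁻¹' A) = (ν.prod ν) A := by
      nth_rewrite 2 [← Measure.prod_swap]
      rw [Measure.map_apply measurable_swap hAmeas]
    have hunion : (ν.prod ν) (A ∪ Prod.swap ⁻¹' A) = 2 * (ν.prod ν) A := by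
      have h := measure_union_add_inter (μ := ν.prod ν) A (hAmeas.preimage measurable_swap)
      rw [hover, add_zero, hswap] at h
      rw [h, two_mul]
    -- slice of A
    have hslice : ∀ x : ℝ, Prod.mk x ⁻¹' A = Set.Ioc (v + a * x) x := by
      intro x
      ext y
      simp only [Set.mem_preimage, hA_def, Set.mem_setOf_eq, Set.mem_Ioc]
      exact and_comm
    have hA_eq : (ν.prod ν) A = ∫⁻ x, ν (Set.Ioc (v + a * x) x) ∂ν := by
      rw [Measure.prod_apply hAmeas]
      simp_rw [hslice]
    -- restrict to nonnegative x
    have hsplit : ∫⁻ x, ν (Set.Ioc (v + a * x) x) ∂ν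
        = ∫⁻ x in Set.Ici 0, ν (Set.Ioc (v + a * x) x) ∂ν := by
      rw [← lintegral_add_compl (fun x => ν (Set.Ioc (v + a * x) x))
          (measurableSet_Iio : MeasurableSet (Set.Iio (0:ℝ))) (μ := ν),
        Set.compl_Iio,
        setLIntegral_measure_zero _ _ (show ν (Set.Iio 0) = 0 from expMeasure_one_Iio_zero),
        zero_add]
    have hval : ∫⁻ x in Set.Ici 0, ν (Set.Ioc (v + a * x) x) ∂ν
        = ∫⁻ x in Set.Ici 0, ENNReal.ofReal (Real.exp (-(v + a * x)) - Real.exp (-x)) ∂ν := by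
      refine setLIntegral_congr_fun measurableSet_Ici (fun x hx => ?_)
      have hax : 0 ≤ a * x := mul_nonneg ha0 hx
      rw [hν]
      exact expMeasure_one_Ioc (by linarith)
    -- kill [0, b)
    have hkill : ∫⁻ x in Set.Ici 0, ENNReal.ofReal (Real.exp (-(v + a * x)) - Real.exp (-x)) ∂ν
        = ∫⁻ x in Set.Ici b, ENNReal.ofReal (Real.exp (-(v + a * x)) - Real.exp (-x)) ∂ν := by
      rw [← Set.Ico_union_Ici_eq_Ici hb0.le,
        lintegral_union measurableSet_Ici
          (Set.disjoint_left.mpr fun x hx hx' => absurd hx.2 (not_lt.mpr hx'))]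
      have hpt : ∀ x ∈ Set.Ico (0:ℝ) b,
          ENNReal.ofReal (Real.exp (-(v + a * x)) - Real.exp (-x)) = (0 : ENNReal) := by
        intro x hx
        apply ENNReal.ofReal_of_nonpos
        have hxb : x * (1 - a) < v := by
          have := hx.2
          nlinarith
        have : Real.exp (-(v + a * x)) < Real.exp (-x) := Real.exp_lt_exp.mpr (by linarith)
        linarith
      have hzero : ∫⁻ x in Set.Ico (0:ℝ) b,
          ENNReal.ofReal (Real.exp (-(v + a * x)) - Real.exp (-x)) ∂ν = 0 := by
        rw [setLIntegral_congr_fun measurableSet_Ico hpt, lintegral_zero]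
      rw [hzero, zero_add]
    -- convert to volume integral
    set F : ℝ → ℝ := fun x => Real.exp (-v) * Real.exp (-((1 + a) * x)) - Real.exp (-(2 * x))
      with hF_def
    have hconv : ∫⁻ x in Set.Ici b, ENNReal.ofReal (Real.exp (-(v + a * x)) - Real.exp (-x)) ∂ν
        = ∫⁻ x in Set.Ici b, ENNReal.ofReal (F x) := by
      have hgm : Measurable fun x : ℝ => ENNReal.ofReal (Real.exp (-(v + a * x)) - Real.exp (-x)) :=
        ((Real.measurable_exp.comp ((measurable_const.add
          (measurable_const.mul measurable_id)).neg)).sub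
          (Real.measurable_exp.comp measurable_neg)).ennreal_ofReal
      rw [hν, expMeasure_one_withDensity, restrict_withDensity measurableSet_Ici,
        lintegral_withDensity_eq_lintegral_mul _
          (show Measurable (exponentialPDF 1) from
            (measurable_exponentialPDFReal 1).ennreal_ofReal) hgm]
      refine setLIntegral_congr_fun measurableSet_Ici (fun x hx => ?_)
      have hx0 : (0:ℝ) ≤ x := hb0.le.trans hx
      show exponentialPDF 1 x * ENNReal.ofReal (Real.exp (-(v + a * x)) - Real.exp (-x))
          = ENNReal.ofReal (F x)
      rw [exponentialPDF_of_nonneg hx0, ← ENNReal.ofReal_mul (by positivity)]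
      congr 1
      simp only [hF_def, one_mul]
      rw [mul_sub, ← Real.exp_add, ← Real.exp_add, ← Real.exp_add,
        show -x + -(v + a * x) = -v + -((1 + a) * x) by ring,
        show -x + -x = -(2 * x) by ring]
    -- integrability and nonnegativity of F on [b, ∞)
    have hint1 : IntegrableOn (fun x => Real.exp (-((1 + a) * x))) (Set.Ioi b) := by
      have h := exp_neg_integrableOn_Ioi b (by linarith : (0:ℝ) < 1 + a)
      simp only [neg_mul] at h
      exact h
    have hint2 : IntegrableOn (fun x => Real.exp (-(2 * x))) (Set.Ioi b) := by
      have h := exp_neg_integrableOn_Ioi b (by norm_num : (0:ℝ) < 2)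
      simp only [neg_mul] at h
      exact h
    have hFint : IntegrableOn F (Set.Ici b) := by
      rw [integrableOn_Ici_iff_integrableOn_Ioi]
      exact (hint1.const_mul _).sub hint2
    have hFnn : ∀ x ∈ Set.Ici b, 0 ≤ F x := by
      intro x hx
      have hxb : v ≤ x * (1 - a) := by nlinarith [Set.mem_Ici.mp hx]
      have hle : Real.exp (-(2 * x)) ≤ Real.exp (-v) * Real.exp (-((1 + a) * x)) := by
        rw [← Real.exp_add]
        exact Real.exp_le_exp.mpr (by linarith)
      simp only [hF_def]
      linarith
    have hlin : ∫⁻ x in Set.Ici b, ENNReal.ofReal (F x)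
        = ENNReal.ofReal (∫ x in Set.Ici b, F x) :=
      (ofReal_integral_eq_lintegral_ofReal hFint
        ((ae_restrict_iff' measurableSet_Ici).mpr (ae_of_all _ hFnn))).symm
    -- the real integral
    have hkey : Real.exp (-v) * Real.exp (-((1 + a) * b)) = Real.exp (-(2 * b)) := by
      rw [← Real.exp_add]
      congr 1
      nlinarith [hbv]
    have hreal : ∫ x in Set.Ici b, F x = Real.exp (-(2 * b)) * ((1 - a) / (2 * (1 + a))) := by
      rw [integral_Ici_eq_integral_Ioi, hF_def]
      rw [integral_sub (hint1.const_mul _) hint2, integral_const_mul,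
        integral_exp_neg_mul_Ioi' (by linarith : (0:ℝ) < 1 + a) b,
        integral_exp_neg_mul_Ioi' (by norm_num : (0:ℝ) < 2) b,
        show Real.exp (-v) * (Real.exp (-((1 + a) * b)) / (1 + a))
          = Real.exp (-(2 * b)) / (1 + a) by rw [← hkey]; ring]
      field_simp
      ring
    -- combine
    set J : ℝ := Real.exp (-(2 * b)) * ((1 - a) / (2 * (1 + a))) with hJ_def
    have hJ0 : 0 ≤ J :=
      mul_nonneg (Real.exp_nonneg _) (div_nonneg (by linarith) (by linarith))
    have hAval : (ν.prod ν) A = ENNReal.ofReal J := by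
      rw [hA_eq, hsplit, hval, hkill, hconv, hlin, hreal]
    have hCval : (ν.prod ν) ({p : ℝ × ℝ | min p.1 p.2 - a * max p.1 p.2 ≤ v}ᶜ)
        = ENNReal.ofReal (2 * J) := by
      rw [hC, hunion, hAval, ENNReal.ofReal_mul (by norm_num : (0:ℝ) ≤ 2)]
      norm_num
    have hEval : (ν.prod ν) {p : ℝ × ℝ | min p.1 p.2 - a * max p.1 p.2 ≤ v}
        = 1 - ENNReal.ofReal (2 * J) := by
      have h := measure_compl (μ := ν.prod ν) hE2.compl (measure_ne_top _ _)
      rw [compl_compl, hCval, measure_univ] at h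
      exact h
    have hle1 : ENNReal.ofReal (2 * J) ≤ 1 := by
      rw [← hCval]
      exact prob_le_one
    rw [key, hEval, ENNReal.toReal_sub_of_le hle1 (by simp), ENNReal.toReal_one,
      ENNReal.toReal_ofReal (by linarith)]
    have hexp : -2 * v / (1 - a) = -(2 * b) := by
      rw [hb_def]
      ring
    rw [hexp, hJ_def]
    field_simp
  · -- degenerate case
    rw [if_neg hlt]
    push_neg at hlt
    have h1 : ℙ (h' ⁻¹' Set.Iio 0) = 0 := by
      rw [← Measure.map_apply hm' measurableSet_Iio, hd']
      exact expMeasure_one_Iio_zero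
    have h2 : ℙ (h'' ⁻¹' Set.Iio 0) = 0 := by
      rw [← Measure.map_apply hm'' measurableSet_Iio, hd'']
      exact expMeasure_one_Iio_zero
    have hsub : {ω | min (h' ω) (h'' ω) - θ * μ * max (h' ω) (h'' ω) ≤ v}ᶜ
        ⊆ h' ⁻¹' Set.Iio 0 ∪ h'' ⁻¹' Set.Iio 0 := by
      intro ω hω
      by_contra hcon
      simp only [Set.mem_union, Set.mem_preimage, Set.mem_Iio, not_or, not_lt] at hcon
      obtain ⟨hp, hq⟩ := hcon
      apply hω
      show min (h' ω) (h'' ω) - θ * μ * max (h' ω) (h'' ω) ≤ v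
      have hmax : 0 ≤ max (h' ω) (h'' ω) := le_max_of_le_left hp
      have hminmax : min (h' ω) (h'' ω) ≤ max (h' ω) (h'' ω) := min_le_max
      have : a * max (h' ω) (h'' ω) ≥ 1 * max (h' ω) (h'' ω) :=
        mul_le_mul_of_nonneg_right hlt hmax
      rw [← ha_def]
      nlinarith
    have hcompl : ℙ ({ω | min (h' ω) (h'' ω) - θ * μ * max (h' ω) (h'' ω) ≤ v}ᶜ) = 0 :=
      measure_mono_null hsub (measure_union_null h1 h2)
    have hms : MeasurableSet {ω | min (h' ω) (h'' ω) - θ * μ * max (h' ω) (h'' ω) ≤ v} :=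
      measurableSet_le ((hm'.min hm'').sub (measurable_const.mul (hm'.max hm'')))
        measurable_const
    rw [(prob_compl_eq_zero_iff hms).mp hcompl]
    simp
end

section
/- Let h', h'' be i.i.d. Exp(1) random variables and I ≥ 0 a nonnegative random variable independent of (h',h''). For θ ≥ 1, the probability P(max(h',h'')/(I + min(h',h'')) > θ) equals (2/(1+θ))·E[exp(−θI)]. -/
open MeasureTheory ProbabilityTheory Real

namespace RRSAux

open Set

lemma expMeasure_eq : expMeasure 1 = volume.withDensity (exponentialPDF 1) := rfl

lemma exp_Iio_zero : expMeasure 1 (Iio 0) = 0 := by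
  rw [expMeasure_eq, withDensity_apply _ measurableSet_Iio]
  exact lintegral_exponentialPDF_of_nonpos le_rfl

lemma exp_ae_nonneg : ∀ᵐ x ∂(expMeasure 1), 0 ≤ x := by
  rw [ae_iff]
  convert exp_Iio_zero using 2
  ext x; simp [not_le, Iio]

instance : IsProbabilityMeasure (expMeasure 1) := isProbabilityMeasure_expMeasure one_pos

lemma exp_tail {a : ℝ} (ha : 0 ≤ a) : expMeasure 1 (Ioi a) = ENNReal.ofReal (rexp (-a)) := by
  have hIic : expMeasure 1 (Iic a) = ENNReal.ofReal (1 - rexp (-a)) := by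
    rw [expMeasure_eq, withDensity_apply _ measurableSet_Iic,
      lintegral_exponentialPDF_eq_antiDeriv one_pos a, if_pos ha, one_mul]
  rw [← compl_Iic, measure_compl measurableSet_Iic (measure_ne_top _ _), measure_univ, hIic,
    ← ENNReal.ofReal_one, ← ENNReal.ofReal_sub _ (by simp [exp_le_one_iff, ha])]
  norm_num

lemma exp_laplace {θ : ℝ} (hθ : 0 < θ) :
    ∫⁻ y, ENNReal.ofReal (rexp (-(θ * y))) ∂(expMeasure 1) = ENNReal.ofReal (1 / (1 + θ)) := by
  have h1θ : (0:ℝ) < 1 + θ := by linarith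
  have hmeas : Measurable (exponentialPDF 1) :=
    (measurable_exponentialPDFReal 1).ennreal_ofReal
  rw [expMeasure_eq, lintegral_withDensity_eq_lintegral_mul _ hmeas
    (by exact ((measurable_const.mul measurable_id).neg.exp).ennreal_ofReal)]
  rw [← lintegral_add_compl (μ := volume)
    (f := fun y => (exponentialPDF 1 * fun y => ENNReal.ofReal (rexp (-(θ * y)))) y)
    measurableSet_Ici]
  have hcompl : (Ici (0:ℝ))ᶜ = Iio 0 := compl_Ici
  have hzero : ∫⁻ y in (Ici (0:ℝ))ᶜ,
      (exponentialPDF 1 * fun y => ENNReal.ofReal (rexp (-(θ * y)))) y ∂volume = 0 := by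
    rw [hcompl]
    rw [setLIntegral_congr_fun (f := fun y => (exponentialPDF 1 * fun y =>
      ENNReal.ofReal (rexp (-(θ * y)))) y) (g := fun _ => 0) measurableSet_Iio
      (fun y hy => by
        simp [exponentialPDF_of_neg (show y < 0 from hy)])]
    simp
  rw [hzero, add_zero]
  have hcong : ∫⁻ y in Ici (0:ℝ),
      (exponentialPDF 1 * fun y => ENNReal.ofReal (rexp (-(θ * y)))) y ∂volume
      = ∫⁻ y in Ici (0:ℝ), ENNReal.ofReal (rexp (-((1 + θ) * y))) ∂volume := by
    refine setLIntegral_congr_fun measurableSet_Ici (fun y hy => ?_)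
    have hy : (0:ℝ) ≤ y := hy
    simp only [Pi.mul_apply, exponentialPDF_of_nonneg hy, one_mul]
    rw [← ENNReal.ofReal_mul (exp_nonneg _), ← Real.exp_add]
    ring_nf
  rw [hcong]
  have hint : IntegrableOn (fun y => rexp (-((1 + θ) * y))) (Ici (0:ℝ)) := by
    rw [integrableOn_Ici_iff_integrableOn_Ioi]
    have heq : (fun y => rexp (-((1 + θ) * y))) = (fun x : ℝ => rexp (-(1 + θ) * x)) := by
      funext x; ring_nf
    rw [heq]
    exact exp_neg_integrableOn_Ioi 0 h1θ
  rw [← ofReal_integral_eq_lintegral_ofReal hint (ae_of_all _ fun y => (exp_pos _).le)]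
  congr 1
  rw [integral_Ici_eq_integral_Ioi]
  have := integral_comp_mul_left_Ioi (fun z => rexp (-z)) 0 h1θ
  simp only [mul_zero, integral_exp_neg_Ioi, neg_zero, exp_zero, smul_eq_mul, mul_one] at this
  simpa [one_div] using this


lemma sliceA {θ t : ℝ} (hθ : 0 < θ) (ht : 0 ≤ t) :
    ((expMeasure 1).prod (expMeasure 1)) {p : ℝ × ℝ | θ * (t + p.2) < p.1}
      = ENNReal.ofReal (rexp (-(θ * t)) * (1 / (1 + θ))) := by
  have hmS : MeasurableSet {p : ℝ × ℝ | θ * (t + p.2) < p.1} :=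
    measurableSet_lt (measurable_const.mul (measurable_const.add measurable_snd)) measurable_fst
  rw [Measure.prod_apply_symm hmS]
  have hcong : ∀ᵐ y ∂(expMeasure 1),
      expMeasure 1 ((fun x => (x, y)) ⁻¹' {p : ℝ × ℝ | θ * (t + p.2) < p.1})
        = ENNReal.ofReal (rexp (-(θ * t))) * ENNReal.ofReal (rexp (-(θ * y))) := by
    filter_upwards [exp_ae_nonneg] with y hy
    have hpre : (fun x => (x, y)) ⁻¹' {p : ℝ × ℝ | θ * (t + p.2) < p.1} = Ioi (θ * (t + y)) := by
      ext x; simp [Ioi]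
    rw [hpre, exp_tail (by positivity), ← ENNReal.ofReal_mul (exp_nonneg _), ← Real.exp_add]
    ring_nf
  rw [lintegral_congr_ae hcong, lintegral_const_mul' _ _ ENNReal.ofReal_ne_top, exp_laplace hθ,
    ← ENNReal.ofReal_mul (exp_nonneg _)]

lemma sliceB {θ t : ℝ} (hθ : 0 < θ) (ht : 0 ≤ t) :
    ((expMeasure 1).prod (expMeasure 1)) {p : ℝ × ℝ | θ * (t + p.1) < p.2}
      = ENNReal.ofReal (rexp (-(θ * t)) * (1 / (1 + θ))) := by
  have hmS : MeasurableSet {p : ℝ × ℝ | θ * (t + p.1) < p.2} :=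
    measurableSet_lt (measurable_const.mul (measurable_const.add measurable_fst)) measurable_snd
  rw [Measure.prod_apply hmS]
  have hcong : ∀ᵐ x ∂(expMeasure 1),
      expMeasure 1 (Prod.mk x ⁻¹' {p : ℝ × ℝ | θ * (t + p.1) < p.2})
        = ENNReal.ofReal (rexp (-(θ * t))) * ENNReal.ofReal (rexp (-(θ * x))) := by
    filter_upwards [exp_ae_nonneg] with x hx
    have hpre : Prod.mk x ⁻¹' {p : ℝ × ℝ | θ * (t + p.1) < p.2} = Ioi (θ * (t + x)) := by
      ext y; simp [Ioi]
    rw [hpre, exp_tail (by positivity), ← ENNReal.ofReal_mul (exp_nonneg _), ← Real.exp_add]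
    ring_nf
  rw [lintegral_congr_ae hcong, lintegral_const_mul' _ _ ENNReal.ofReal_ne_top, exp_laplace hθ,
    ← ENNReal.ofReal_mul (exp_nonneg _)]

lemma prod_null :
    ((expMeasure 1).prod (expMeasure 1)) ((Iio 0 ×ˢ univ) ∪ (univ ×ˢ Iio 0)) = 0 := by
  refine measure_union_null ?_ ?_ <;> rw [Measure.prod_prod] <;> simp [exp_Iio_zero]

lemma sliceInter {θ t : ℝ} (hθ : 1 ≤ θ) (ht : 0 ≤ t) :
    ((expMeasure 1).prod (expMeasure 1))
      ({p : ℝ × ℝ | θ * (t + p.2) < p.1} ∩ {p : ℝ × ℝ | θ * (t + p.1) < p.2}) = 0 := by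
  refine measure_mono_null ?_ prod_null
  rintro ⟨x, y⟩ ⟨h1, h2⟩
  simp only [mem_setOf_eq] at h1 h2
  simp only [mem_union, mem_prod, mem_Iio, mem_univ, and_true, true_and]
  by_contra h
  push_neg at h
  obtain ⟨hx, hy⟩ := h
  have hθ0 : (0:ℝ) < θ := lt_of_lt_of_le one_pos hθ
  nlinarith [mul_nonneg hθ0.le ht, mul_nonneg (sub_nonneg.mpr hθ) hx,
    mul_nonneg (sub_nonneg.mpr hθ) hy]

lemma prod_ae_nonneg :
    ∀ᵐ p ∂((expMeasure 1).prod (expMeasure 1)), 0 ≤ p.1 ∧ 0 ≤ p.2 := by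
  rw [ae_iff]
  refine measure_mono_null ?_ prod_null
  rintro ⟨x, y⟩ hp
  simp only [mem_setOf_eq, not_and_or, not_le] at hp
  simp only [mem_union, mem_prod, mem_Iio, mem_univ, and_true, true_and]
  exact hp

lemma sliceFull {θ t : ℝ} (hθ : 1 ≤ θ) (ht : 0 ≤ t) :
    ((expMeasure 1).prod (expMeasure 1)) {p : ℝ × ℝ | θ * (t + min p.1 p.2) < max p.1 p.2}
      = ENNReal.ofReal (2 / (1 + θ) * rexp (-(θ * t))) := by
  have hθ0 : (0:ℝ) < θ := lt_of_lt_of_le one_pos hθ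
  set A : Set (ℝ × ℝ) := {p : ℝ × ℝ | θ * (t + p.2) < p.1} with hA
  set B : Set (ℝ × ℝ) := {p : ℝ × ℝ | θ * (t + p.1) < p.2} with hB
  have hmB : MeasurableSet B :=
    measurableSet_lt (measurable_const.mul (measurable_const.add measurable_fst)) measurable_snd
  have hae : {p : ℝ × ℝ | θ * (t + min p.1 p.2) < max p.1 p.2}
      =ᵐ[(expMeasure 1).prod (expMeasure 1)] ((A ∪ B : Set (ℝ × ℝ))) := by
    rw [Filter.eventuallyEq_set]
    filter_upwards [prod_ae_nonneg] with p hp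
    obtain ⟨hx, hy⟩ := hp
    constructor
    · intro h
      rcases le_total p.2 p.1 with hc | hc
      · left
        simp only [hA, mem_setOf_eq]
        rwa [min_eq_right hc, max_eq_left hc] at h
      · right
        simp only [hB, mem_setOf_eq]
        rwa [min_eq_left hc, max_eq_right hc] at h
    · intro h
      rcases h with h | h
      · simp only [hA, mem_setOf_eq] at h
        have h1 : θ * (t + min p.1 p.2) ≤ θ * (t + p.2) :=
          mul_le_mul_of_nonneg_left (add_le_add_right (min_le_right _ _) t) hθ0.le
        have h2 : p.1 ≤ max p.1 p.2 := le_max_left _ _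
        exact lt_of_le_of_lt h1 (lt_of_lt_of_le h h2)
      · simp only [hB, mem_setOf_eq] at h
        have h1 : θ * (t + min p.1 p.2) ≤ θ * (t + p.1) :=
          mul_le_mul_of_nonneg_left (add_le_add_right (min_le_left _ _) t) hθ0.le
        have h2 : p.2 ≤ max p.1 p.2 := le_max_right _ _
        exact lt_of_le_of_lt h1 (lt_of_lt_of_le h h2)
  rw [measure_congr hae,
    measure_union₀ hmB.nullMeasurableSet (sliceInter hθ ht),
    sliceA hθ0 ht, sliceB hθ0 ht,
    ← ENNReal.ofReal_add (by positivity) (by positivity)]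
  congr 1
  ring

end RRSAux

/-- Success probability of the first decoded MTD under RRS for `θ ≥ 1`:
`P(max(h',h'')/(I + min(h',h'')) > θ) = (2/(1+θ)) E[exp(−θ I)]`. -/
theorem rrs_success_first_large_theta {Ω : Type*} [MeasureSpace Ω]
    [IsProbabilityMeasure (ℙ : Measure Ω)]
    (h' h'' I : Ω → ℝ) (hm' : Measurable h') (hm'' : Measurable h'')
    (hmI : Measurable I)
    (hind12 : IndepFun h' h'' ℙ)
    (hindI : IndepFun (fun ω => (h' ω, h'' ω)) I ℙ)
    (hd' : Measure.map h' ℙ = expMeasure 1)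
    (hd'' : Measure.map h'' ℙ = expMeasure 1)
    (hIpos : ∀ᵐ ω ∂ℙ, 0 ≤ I ω)
    (θ : ℝ) (hθ : 1 ≤ θ) :
    (ℙ {ω | max (h' ω) (h'' ω) > θ * (I ω + min (h' ω) (h'' ω))}).toReal =
      (2 / (1 + θ)) * ∫ ω, Real.exp (-θ * I ω) ∂ℙ := by
  have hθ0 : (0:ℝ) < θ := lt_of_lt_of_le one_pos hθ
  have h1θ : (0:ℝ) < 1 + θ := by linarith
  set ν : Measure ℝ := Measure.map I ℙ with hν
  haveI : IsProbabilityMeasure ν := Measure.isProbabilityMeasure_map hmI.aemeasurable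
  have hνpos : ∀ᵐ t ∂ν, 0 ≤ t :=
    (MeasureTheory.ae_map_iff hmI.aemeasurable measurableSet_Ici).mpr hIpos
  have hpairmap : Measure.map (fun ω => (h' ω, h'' ω)) ℙ
      = (expMeasure 1).prod (expMeasure 1) := by
    rw [(indepFun_iff_map_prod_eq_prod_map_map hm'.aemeasurable hm''.aemeasurable).mp hind12,
      hd', hd'']
  have hmap : Measure.map (fun ω => ((h' ω, h'' ω), I ω)) ℙ
      = ((expMeasure 1).prod (expMeasure 1)).prod ν := by
    rw [(indepFun_iff_map_prod_eq_prod_map_map ((hm'.prodMk hm'').aemeasurable)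
      hmI.aemeasurable).mp hindI, hpairmap]
  set S : Set ((ℝ × ℝ) × ℝ) := {p | θ * (p.2 + min p.1.1 p.1.2) < max p.1.1 p.1.2} with hSdef
  have hmS : MeasurableSet S :=
    measurableSet_lt (measurable_const.mul (measurable_snd.add
      (measurable_fst.fst.min measurable_fst.snd))) (measurable_fst.fst.max measurable_fst.snd)
  have hev : ℙ {ω | max (h' ω) (h'' ω) > θ * (I ω + min (h' ω) (h'' ω))}
      = (((expMeasure 1).prod (expMeasure 1)).prod ν) S := by
    rw [← hmap, Measure.map_apply ((hm'.prodMk hm'').prodMk hmI) hmS]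
    rfl
  have hprod : (((expMeasure 1).prod (expMeasure 1)).prod ν) S
      = ∫⁻ t, ENNReal.ofReal (2 / (1 + θ) * rexp (-(θ * t))) ∂ν := by
    rw [Measure.prod_apply_symm hmS]
    refine lintegral_congr_ae ?_
    filter_upwards [hνpos] with t ht
    have hpre : (fun p => (p, t)) ⁻¹' S
        = {p : ℝ × ℝ | θ * (t + min p.1 p.2) < max p.1 p.2} := rfl
    rw [hpre, RRSAux.sliceFull hθ ht]
  have hint : Integrable (fun t => rexp (-(θ * t))) ν := by
    refine Integrable.mono' (integrable_const 1)
      ((by fun_prop : Measurable fun t : ℝ => rexp (-(θ * t))).aestronglyMeasurable) ?_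
    filter_upwards [hνpos] with t ht
    rw [Real.norm_of_nonneg (exp_pos _).le]
    exact exp_le_one_iff.mpr (by nlinarith)
  have hlin : ∫⁻ t, ENNReal.ofReal (2 / (1 + θ) * rexp (-(θ * t))) ∂ν
      = ENNReal.ofReal ((2 / (1 + θ)) * ∫ t, rexp (-(θ * t)) ∂ν) := by
    simp_rw [ENNReal.ofReal_mul (by positivity : (0:ℝ) ≤ 2 / (1 + θ))]
    rw [lintegral_const_mul' _ _ ENNReal.ofReal_ne_top,
      ← ofReal_integral_eq_lintegral_ofReal hint (ae_of_all _ fun t => (exp_pos _).le),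
      ← ENNReal.ofReal_mul (by positivity)]
  have hIntmap : ∫ t, rexp (-(θ * t)) ∂ν = ∫ ω, rexp (-θ * I ω) ∂ℙ := by
    rw [hν, integral_map hmI.aemeasurable
      ((by fun_prop : Measurable fun t : ℝ => rexp (-(θ * t))).aestronglyMeasurable)]
    simp_rw [neg_mul]
  rw [hev, hprod, hlin, hIntmap, ENNReal.toReal_ofReal]
  exact mul_nonneg (by positivity) (integral_nonneg fun ω => (exp_pos _).le)
end

section
/- Let h', h'' be i.i.d. Exp(1) random variables, I ≥ 0 independent of them, θ ≥ 0 and μ ∈ [0,1] with θμ < 1. Then P(min(h',h'')/(I + μ·max(h',h'')) > θ) = ((1−θμ)/(1+θμ))·E[exp(−(2θ/(1−θμ))I)]. If θμ ≥ 1 this probability is 0. -/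
open MeasureTheory ProbabilityTheory Real Set

lemma NOMA.expM_def : expMeasure 1 = volume.withDensity (exponentialPDF 1) := by
  show gammaMeasure 1 1 = _
  rw [gammaMeasure]
  congr 1

lemma NOMA.integral_exp_neg_mul_Ioi {b : ℝ} (hb : 0 < b) (a : ℝ) :
    ∫ x in Ioi a, exp (-(b * x)) = exp (-(b * a)) / b := by
  have hderiv : ∀ x ∈ Ioi a, HasDerivAt (fun x : ℝ => -exp (-(b * x)) / b)
      (exp (-(b * x))) x := by
    intro x _
    have h0 : HasDerivAt (fun x : ℝ => -(b * x)) (-b) x := by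
      simpa using ((hasDerivAt_id x).const_mul b).fun_neg
    have h1 := (h0.exp.fun_neg).div_const b
    refine h1.congr_deriv ?_
    field_simp
  have hcont : ContinuousWithinAt (fun x : ℝ => -exp (-(b * x)) / b) (Ici a) a := by
    apply Continuous.continuousWithinAt; fun_prop
  have htend : Filter.Tendsto (fun x : ℝ => -exp (-(b * x)) / b) Filter.atTop (nhds 0) := by
    have h3 : Filter.Tendsto (fun x : ℝ => -(b * x)) Filter.atTop Filter.atBot := by
      apply Filter.tendsto_neg_atBot_iff.mpr
      exact Filter.Tendsto.const_mul_atTop hb Filter.tendsto_id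
    have h2 := (Real.tendsto_exp_atBot.comp h3).neg.div_const b
    simpa [Function.comp] using h2
  have hint : IntegrableOn (fun x : ℝ => exp (-(b * x))) (Ioi a) := by
    have := exp_neg_integrableOn_Ioi a hb
    simpa [neg_mul] using this
  have h := MeasureTheory.integral_Ioi_of_hasDerivAt_of_tendsto hcont hderiv hint htend
  rw [h]; ring

lemma NOMA.expM_Ioi {a : ℝ} (ha : 0 ≤ a) :
    expMeasure 1 (Ioi a) = ENNReal.ofReal (exp (-a)) := by
  rw [NOMA.expM_def, withDensity_apply _ measurableSet_Ioi]
  have h1 : ∫⁻ x in Ioi a, exponentialPDF 1 x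
      = ∫⁻ x in Ioi a, ENNReal.ofReal (exp (-x)) := by
    apply setLIntegral_congr_fun measurableSet_Ioi
    intro x hx
    rw [exponentialPDF_of_nonneg (le_trans ha (le_of_lt hx))]
    norm_num
  rw [h1, ← ofReal_integral_eq_lintegral_ofReal, integral_exp_neg_Ioi]
  · exact (by simpa using exp_neg_integrableOn_Ioi a one_pos : IntegrableOn (fun x => rexp (-x)) (Ioi a))
  · filter_upwards with x using (exp_pos _).le

lemma NOMA.expM_singleton (b : ℝ) : expMeasure 1 {b} = 0 := by
  rw [NOMA.expM_def, withDensity_apply _ (measurableSet_singleton b),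
    Measure.restrict_eq_zero.mpr (volume_singleton), lintegral_zero_measure]

lemma NOMA.expM_Iic_zero : expMeasure 1 (Iic (0:ℝ)) = 0 := by
  have hP : IsProbabilityMeasure (expMeasure 1) := isProbabilityMeasure_gammaMeasure zero_lt_one one_pos
  have h := NOMA.expM_Ioi (le_refl 0)
  have : expMeasure 1 (Iic (0:ℝ)) = 1 - expMeasure 1 (Ioi 0) := by
    rw [← compl_Ioi, measure_compl measurableSet_Ioi (measure_ne_top _ _), measure_univ]
  rw [this, h]; norm_num

lemma NOMA.expM_Ioo {a b : ℝ} (ha : 0 ≤ a) :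
    expMeasure 1 (Ioo a b) = ENNReal.ofReal (exp (-a) - exp (-b)) := by
  rcases le_or_gt b a with hba | hab
  · rw [Ioo_eq_empty (by exact fun h => absurd hba (not_le.mpr h)), measure_empty]
    rw [eq_comm, ENNReal.ofReal_eq_zero]
    have : exp (-a) ≤ exp (-b) := exp_le_exp.mpr (by linarith)
    linarith
  · have hIci : expMeasure 1 (Ici b) = ENNReal.ofReal (exp (-b)) := by
      have : Ici b = {b} ∪ Ioi b := by
        ext x; simp [le_iff_lt_or_eq, eq_comm, or_comm]
      rw [this, measure_union _ measurableSet_Ioi, NOMA.expM_singleton,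
        NOMA.expM_Ioi (le_trans ha hab.le), zero_add]
      simp [Set.disjoint_left]
    have hsub : Ici b ⊆ Ioi a := fun x hx => lt_of_lt_of_le hab hx
    have hdiff : Ioo a b = Ioi a \ Ici b := by
      ext x
      constructor
      · exact fun hx => ⟨hx.1, not_le.mpr hx.2⟩
      · exact fun hx => ⟨hx.1, not_le.mp hx.2⟩
    rw [hdiff, measure_diff hsub measurableSet_Ici.nullMeasurableSet
        (by rw [hIci]; exact ENNReal.ofReal_ne_top),
      NOMA.expM_Ioi ha, hIci, ← ENNReal.ofReal_sub _ (exp_pos _).le]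

lemma NOMA.expM_Ioc {a b : ℝ} (ha : 0 ≤ a) :
    expMeasure 1 (Ioc a b) = ENNReal.ofReal (exp (-a) - exp (-b)) := by
  rw [← NOMA.expM_Ioo ha]
  apply le_antisymm
  · calc expMeasure 1 (Ioc a b) ≤ expMeasure 1 (Ioo a b ∪ {b}) := by
          apply measure_mono; intro x hx
          rcases eq_or_lt_of_le hx.2 with h | h
          · exact Or.inr (by simp [h])
          · exact Or.inl ⟨hx.1, h⟩
      _ ≤ expMeasure 1 (Ioo a b) + expMeasure 1 {b} := measure_union_le _ _
      _ = expMeasure 1 (Ioo a b) := by rw [NOMA.expM_singleton, add_zero]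
  · exact measure_mono Ioo_subset_Ioc_self

lemma NOMA.auxE {c d : ℝ} (hc : 0 ≤ c) (hd0 : 0 ≤ d) (hd1 : d < 1) :
    ∫⁻ y in Ioi (0:ℝ), ENNReal.ofReal (exp (-y) * (exp (-(c + d*y)) - exp (-y)))
      = ENNReal.ofReal (exp (-(2*(c/(1-d)))) * ((1-d)/(2*(1+d)))) := by
  set y0 : ℝ := c / (1 - d) with hy0
  have h1d : 0 < 1 - d := by linarith
  have hy00 : 0 ≤ y0 := div_nonneg hc h1d.le
  have hkey : (1 - d) * y0 = c := by rw [hy0, mul_div_cancel₀ _ h1d.ne']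
  -- split the domain
  have hsplit : Ioi (0:ℝ) = Ioc 0 y0 ∪ Ioi y0 := (Ioc_union_Ioi_eq_Ioi hy00).symm
  rw [hsplit, lintegral_union measurableSet_Ioi (Ioc_disjoint_Ioi le_rfl)]
  have hzero : ∫⁻ y in Ioc (0:ℝ) y0,
      ENNReal.ofReal (exp (-y) * (exp (-(c + d*y)) - exp (-y))) = 0 := by
    have hz : ∀ y ∈ Ioc (0:ℝ) y0,
        ENNReal.ofReal (exp (-y) * (exp (-(c + d*y)) - exp (-y))) = (0:ENNReal) := by
      intro y hy
      rw [ENNReal.ofReal_eq_zero]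
      have h1 : y ≤ c + d * y := by nlinarith [hy.2, hy.1.le]
      have : exp (-(c + d * y)) ≤ exp (-y) := exp_le_exp.mpr (by linarith)
      nlinarith [exp_pos (-y), this]
    rw [setLIntegral_congr_fun measurableSet_Ioc hz, lintegral_zero]
  rw [hzero, zero_add]
  -- the main piece
  have hfun : ∀ y : ℝ, exp (-y) * (exp (-(c + d*y)) - exp (-y))
      = exp (-c) * exp (-((1+d) * y)) - exp (-(2 * y)) := by
    intro y
    rw [mul_sub, ← exp_add, ← exp_add, ← exp_add]
    ring_nf
  have hint1 : IntegrableOn (fun y : ℝ => exp (-c) * exp (-((1+d) * y))) (Ioi y0) := by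
    apply Integrable.const_mul
    exact (exp_neg_integrableOn_Ioi y0 (show (0:ℝ) < 1 + d by linarith)).congr_fun
      (fun x _ => by simp only [neg_mul]) measurableSet_Ioi
  have hint2 : IntegrableOn (fun y : ℝ => exp (-(2 * y))) (Ioi y0) := by
    exact (exp_neg_integrableOn_Ioi y0 (show (0:ℝ) < 2 by norm_num)).congr_fun
      (fun x _ => by simp only [neg_mul]) measurableSet_Ioi
  have hnn : ∀ y ∈ Ioi y0, 0 ≤ exp (-y) * (exp (-(c + d*y)) - exp (-y)) := by
    intro y hy
    have h1 : c + d * y ≤ y := by nlinarith [mem_Ioi.mp hy]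
    have : exp (-y) ≤ exp (-(c + d * y)) := exp_le_exp.mpr (by linarith)
    nlinarith [exp_pos (-y)]
  have hint : IntegrableOn (fun y : ℝ => exp (-y) * (exp (-(c + d*y)) - exp (-y))) (Ioi y0) := by
    apply IntegrableOn.congr_fun (hint1.sub hint2) (fun y _ => (hfun y).symm) measurableSet_Ioi
  rw [← ofReal_integral_eq_lintegral_ofReal hint
    ((ae_restrict_iff' measurableSet_Ioi).mpr (ae_of_all _ hnn))]
  congr 1
  rw [setIntegral_congr_fun measurableSet_Ioi (fun y _ => hfun y),
    integral_sub hint1 hint2, integral_const_mul,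
    NOMA.integral_exp_neg_mul_Ioi (show (0:ℝ) < 1 + d by linarith),
    NOMA.integral_exp_neg_mul_Ioi (show (0:ℝ) < 2 by norm_num)]
  have h2y0 : c + (1 + d) * y0 = 2 * y0 := by linarith [hkey]
  have hmerge : exp (-c) * exp (-((1 + d) * y0)) = exp (-(2 * y0)) := by
    rw [← exp_add]; congr 1; linarith
  have h2 : (2 : ℝ) * (c / (1 - d)) = 2 * y0 := by rw [hy0]
  rw [h2, ← mul_div_assoc, hmerge]
  have hpos : (0:ℝ) < 1 + d := by linarith
  field_simp
  ring

lemma NOMA.measurable_expPDF : Measurable (exponentialPDF 1) :=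
  (measurable_gammaPDFReal 1 1).ennreal_ofReal

lemma NOMA.auxD {c d : ℝ} (hc : 0 ≤ c) (hd0 : 0 ≤ d) (hd1 : d < 1)
    (S : ℝ → ℝ → Set ℝ)
    (hS : ∀ a b : ℝ, 0 ≤ a → expMeasure 1 (S a b) = ENNReal.ofReal (exp (-a) - exp (-b))) :
    ∫⁻ y, expMeasure 1 (S (c + d*y) y) ∂(expMeasure 1)
      = ENNReal.ofReal (exp (-(2*(c/(1-d)))) * ((1-d)/(2*(1+d)))) := by
  rw [← lintegral_add_compl (fun y => expMeasure 1 (S (c + d*y) y)) (measurableSet_Ioi (a := (0:ℝ)))]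
  have hcompl : ∫⁻ y in (Ioi (0:ℝ))ᶜ, expMeasure 1 (S (c + d*y) y) ∂(expMeasure 1) = 0 := by
    apply setLIntegral_measure_zero
    rw [compl_Ioi]
    exact NOMA.expM_Iic_zero
  rw [hcompl, add_zero]
  have hcongr : ∀ y ∈ Ioi (0:ℝ), expMeasure 1 (S (c + d*y) y)
      = ENNReal.ofReal (exp (-(c + d*y)) - exp (-y)) := by
    intro y hy
    exact hS _ _ (by nlinarith [mem_Ioi.mp hy])
  rw [setLIntegral_congr_fun measurableSet_Ioi hcongr]
  rw [NOMA.expM_def, setLIntegral_withDensity_eq_setLIntegral_mul _ NOMA.measurable_expPDF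
    (by fun_prop) measurableSet_Ioi]
  rw [← NOMA.auxE hc hd0 hd1]
  apply setLIntegral_congr_fun measurableSet_Ioi
  intro y hy
  simp only [Pi.mul_apply]
  rw [exponentialPDF_of_nonneg (le_of_lt hy), ENNReal.ofReal_mul (exp_pos _).le]
  norm_num

lemma NOMA.auxF {c d : ℝ} (hc : 0 ≤ c) (hd0 : 0 ≤ d) (hd1 : d < 1) :
    (expMeasure 1).prod (expMeasure 1) {p : ℝ × ℝ | c + d * max p.1 p.2 < min p.1 p.2}
      = ENNReal.ofReal (exp (-(2*(c/(1-d)))) * ((1-d)/(1+d))) := by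
  have hP : IsProbabilityMeasure (expMeasure 1) := isProbabilityMeasure_gammaMeasure zero_lt_one one_pos
  set A₁ : Set (ℝ × ℝ) := {p | p.1 < p.2 ∧ c + d * p.2 < p.1} with hA₁
  set A₂ : Set (ℝ × ℝ) := {p | p.2 ≤ p.1 ∧ c + d * p.1 < p.2} with hA₂
  have hmeas₁ : MeasurableSet A₁ :=
    (measurableSet_lt measurable_fst measurable_snd).inter
      (measurableSet_lt (measurable_const.add (measurable_snd.const_mul d)) measurable_fst)
  have hmeas₂ : MeasurableSet A₂ :=
    (measurableSet_le measurable_snd measurable_fst).inter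
      (measurableSet_lt (measurable_const.add (measurable_fst.const_mul d)) measurable_snd)
  have hA : {p : ℝ × ℝ | c + d * max p.1 p.2 < min p.1 p.2} = A₁ ∪ A₂ := by
    ext p
    simp only [mem_setOf_eq, mem_union, hA₁, hA₂]
    rcases lt_trichotomy p.1 p.2 with h | h | h
    · rw [max_eq_right h.le, min_eq_left h.le]
      constructor
      · exact fun hx => Or.inl ⟨h, hx⟩
      · rintro (⟨_, hx⟩ | ⟨hle, _⟩)
        · exact hx
        · exact absurd h (not_lt.mpr hle)
    · rw [max_eq_right h.le, min_eq_left h.le]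
      constructor
      · intro hx; exact Or.inr ⟨h.ge, by rw [← h] at hx ⊢; exact hx⟩
      · rintro (⟨hlt, _⟩ | ⟨_, hx⟩)
        · exact absurd hlt (by rw [h]; exact lt_irrefl _)
        · rw [h] at hx ⊢; exact hx
    · rw [max_eq_left h.le, min_eq_right h.le]
      constructor
      · exact fun hx => Or.inr ⟨h.le, hx⟩
      · rintro (⟨hlt, _⟩ | ⟨_, hx⟩)
        · exact absurd hlt (not_lt.mpr h.le)
        · exact hx
  have hdisj : Disjoint A₁ A₂ := by
    rw [Set.disjoint_left]
    rintro p ⟨h1, _⟩ ⟨h2, _⟩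
    exact absurd h1 (not_lt.mpr h2)
  rw [hA, measure_union hdisj hmeas₂]
  have h1 : (expMeasure 1).prod (expMeasure 1) A₁
      = ENNReal.ofReal (exp (-(2*(c/(1-d)))) * ((1-d)/(2*(1+d)))) := by
    rw [Measure.prod_apply_symm hmeas₁]
    have hslice : ∀ y : ℝ, ((fun x => (x, y)) ⁻¹' A₁) = Ioo (c + d*y) y := by
      intro y; ext x
      simp only [mem_preimage, hA₁, mem_setOf_eq, mem_Ioo]
      exact and_comm
    simp_rw [hslice]
    exact NOMA.auxD hc hd0 hd1 _ (fun a b ha => NOMA.expM_Ioo ha)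
  have h2 : (expMeasure 1).prod (expMeasure 1) A₂
      = ENNReal.ofReal (exp (-(2*(c/(1-d)))) * ((1-d)/(2*(1+d)))) := by
    rw [Measure.prod_apply hmeas₂]
    have hslice : ∀ x : ℝ, (Prod.mk x ⁻¹' A₂) = Ioc (c + d*x) x := by
      intro x; ext y
      simp only [mem_preimage, hA₂, mem_setOf_eq, mem_Ioc]
      exact and_comm
    simp_rw [hslice]
    exact NOMA.auxD hc hd0 hd1 _ (fun a b ha => NOMA.expM_Ioc ha)
  rw [h1, h2, ← ENNReal.ofReal_add
    (mul_nonneg (exp_pos _).le (div_nonneg (by linarith) (by linarith)))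
    (mul_nonneg (exp_pos _).le (div_nonneg (by linarith) (by linarith)))]
  congr 1
  have hpos : (0:ℝ) < 1 + d := by linarith
  field_simp
  ring


/-- Success probability of the second decoded MTD under 2-user NOMA with imperfect SIC. -/
theorem noma_success_second {Ω : Type*} [MeasureSpace Ω]
    [IsProbabilityMeasure (ℙ : Measure Ω)]
    (h' h'' I : Ω → ℝ) (hm' : Measurable h') (hm'' : Measurable h'')
    (hmI : Measurable I)
    (hind12 : IndepFun h' h'' ℙ)
    (hindI : IndepFun (fun ω => (h' ω, h'' ω)) I ℙ)
    (hd' : Measure.map h' ℙ = expMeasure 1)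
    (hd'' : Measure.map h'' ℙ = expMeasure 1)
    (hIpos : ∀ᵐ ω ∂ℙ, 0 ≤ I ω)
    (θ μ : ℝ) (hθ : 0 ≤ θ) (hμ0 : 0 ≤ μ) (hμ1 : μ ≤ 1) :
    (θ * μ < 1 →
      (ℙ {ω | min (h' ω) (h'' ω) > θ * (I ω + μ * max (h' ω) (h'' ω))}).toReal =
        ((1 - θ * μ) / (1 + θ * μ)) * ∫ ω, Real.exp (-(2 * θ / (1 - θ * μ)) * I ω) ∂ℙ) ∧
    (1 ≤ θ * μ →
      (ℙ {ω | min (h' ω) (h'' ω) > θ * (I ω + μ * max (h' ω) (h'' ω))}).toReal = 0) := by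
  have hPe : IsProbabilityMeasure (expMeasure 1) := isProbabilityMeasure_gammaMeasure zero_lt_one one_pos
  have hae' : ∀ᵐ ω ∂ℙ, 0 ≤ h' ω := by
    rw [ae_iff]
    have h0 : {ω | ¬ 0 ≤ h' ω} = h' ⁻¹' (Iio 0) := by ext ω; simp [not_le]
    rw [h0, ← Measure.map_apply hm' measurableSet_Iio, hd']
    exact measure_mono_null Iio_subset_Iic_self NOMA.expM_Iic_zero
  have hae'' : ∀ᵐ ω ∂ℙ, 0 ≤ h'' ω := by
    rw [ae_iff]
    have h0 : {ω | ¬ 0 ≤ h'' ω} = h'' ⁻¹' (Iio 0) := by ext ω; simp [not_le]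
    rw [h0, ← Measure.map_apply hm'' measurableSet_Iio, hd'']
    exact measure_mono_null Iio_subset_Iic_self NOMA.expM_Iic_zero
  constructor
  · intro hd1
    have hd0 : 0 ≤ θ * μ := mul_nonneg hθ hμ0
    have h1d : 0 < 1 - θ * μ := by linarith
    set a : ℝ := 2 * θ / (1 - θ * μ) with ha
    have ha0 : 0 ≤ a := by positivity
    set K : ℝ := (1 - θ * μ) / (1 + θ * μ) with hK
    have hK0 : 0 ≤ K := div_nonneg h1d.le (by linarith)
    have h1 : Measure.map (fun ω => (h' ω, h'' ω)) ℙ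
        = (expMeasure 1).prod (expMeasure 1) := by
      rw [(ProbabilityTheory.indepFun_iff_map_prod_eq_prod_map_map hm'.aemeasurable
        hm''.aemeasurable).mp hind12, hd', hd'']
    set ν := Measure.map I ℙ with hν
    have hPν : IsProbabilityMeasure ν := Measure.isProbabilityMeasure_map hmI.aemeasurable
    have h2 : Measure.map (fun ω => ((h' ω, h'' ω), I ω)) ℙ
        = ((expMeasure 1).prod (expMeasure 1)).prod ν := by
      rw [(ProbabilityTheory.indepFun_iff_map_prod_eq_prod_map_map
        (hm'.prodMk hm'').aemeasurable hmI.aemeasurable).mp hindI, h1]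
    set E : Set ((ℝ × ℝ) × ℝ) :=
      {p | θ * (p.2 + μ * max p.1.1 p.1.2) < min p.1.1 p.1.2} with hE
    have hEmeas : MeasurableSet E := by
      apply measurableSet_lt
      · exact ((measurable_snd.add
          (((measurable_fst.fst.max measurable_fst.snd)).const_mul μ)).const_mul θ)
      · exact measurable_fst.fst.min measurable_fst.snd
    have hEvent : {ω | min (h' ω) (h'' ω) > θ * (I ω + μ * max (h' ω) (h'' ω))}
        = (fun ω => ((h' ω, h'' ω), I ω)) ⁻¹' E := rfl
    rw [hEvent, ← Measure.map_apply ((hm'.prodMk hm'').prodMk hmI) hEmeas, h2,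
      Measure.prod_apply_symm hEmeas]
    have haeν : ∀ᵐ i ∂ν, 0 ≤ i := by
      rw [hν]
      exact (ae_map_iff hmI.aemeasurable measurableSet_Ici).mpr hIpos
    have hslice : ∀ i : ℝ, ((fun xy => (xy, i)) ⁻¹' E)
        = {p : ℝ × ℝ | (θ * i) + (θ * μ) * max p.1 p.2 < min p.1 p.2} := by
      intro i; ext p
      simp only [mem_preimage, hE, mem_setOf_eq]
      have : θ * (i + μ * max p.1 p.2) = θ * i + (θ * μ) * max p.1 p.2 := by ring
      rw [this]
    have hcong : ∀ᵐ i ∂ν, ((expMeasure 1).prod (expMeasure 1)) ((fun xy => (xy, i)) ⁻¹' E)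
        = ENNReal.ofReal (K * exp (-a * i)) := by
      filter_upwards [haeν] with i hi
      rw [hslice i, NOMA.auxF (mul_nonneg hθ hi) hd0 hd1, mul_comm]
      have hexpeq : exp (-(2 * ((θ * i) / (1 - θ * μ)))) = exp (-a * i) := by
        congr 1
        rw [ha]
        have hne : (1:ℝ) - θ * μ ≠ 0 := ne_of_gt h1d
        field_simp
      rw [hexpeq]
    rw [lintegral_congr_ae hcong]
    have hIexp : Integrable (fun i => exp (-a * i)) ν := by
      apply Integrable.mono' (integrable_const 1)
      · exact (Continuous.aestronglyMeasurable (by fun_prop))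
      · filter_upwards [haeν] with i hi
        rw [Real.norm_eq_abs, abs_of_pos (exp_pos _)]
        calc exp (-a * i) ≤ exp 0 := exp_le_exp.mpr (by nlinarith)
          _ = 1 := exp_zero
    have hInt : Integrable (fun i => K * exp (-a * i)) ν := hIexp.const_mul K
    rw [← ofReal_integral_eq_lintegral_ofReal hInt
      (ae_of_all _ (fun i => mul_nonneg hK0 (exp_pos _).le))]
    rw [ENNReal.toReal_ofReal
      (integral_nonneg (fun i => mul_nonneg hK0 (exp_pos _).le))]
    rw [integral_const_mul]
    congr 1
    rw [hν, integral_map hmI.aemeasurable (Continuous.aestronglyMeasurable (by fun_prop))]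
  · intro hge
    have hnull : ℙ {ω | ¬ (0 ≤ h' ω ∧ 0 ≤ h'' ω ∧ 0 ≤ I ω)} = 0 := by
      have := (hae'.and (hae''.and hIpos))
      rwa [ae_iff] at this
    have hsub : {ω | min (h' ω) (h'' ω) > θ * (I ω + μ * max (h' ω) (h'' ω))}
        ⊆ {ω | ¬ (0 ≤ h' ω ∧ 0 ≤ h'' ω ∧ 0 ≤ I ω)} := by
      intro ω hω
      intro hgood
      obtain ⟨hg1, hg2, hg3⟩ := hgood
      have hM0 : 0 ≤ max (h' ω) (h'' ω) := le_trans hg1 (le_max_left _ _)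
      have hmM : min (h' ω) (h'' ω) ≤ max (h' ω) (h'' ω) := min_le_max
      have hexp : θ * (I ω + μ * max (h' ω) (h'' ω))
          = θ * I ω + (θ * μ) * max (h' ω) (h'' ω) := by ring
      have hω' : θ * (I ω + μ * max (h' ω) (h'' ω)) < min (h' ω) (h'' ω) := hω
      nlinarith [mul_nonneg hθ hg3, le_mul_of_one_le_left hM0 hge]
    rw [measure_mono_null hsub hnull]
    rfl
end

section
/- Let α > 2 and let δ* > 0 satisfy ξ^{δ*^{2/α} − 1} + ξ^{2^{(α−2)/α}·δ*^{2/α} − 1} = 2 for some ξ ∈ (0,1). Then 2^{(2−α)/2} ≤ δ* ≤ 1. -/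
open Real

/-- Bounds on the fair-coexistence power budget `δ*`. -/
theorem delta_star_bounds (α ξ δ : ℝ) (hα : 2 < α) (hξ0 : 0 < ξ) (hξ1 : ξ < 1)
    (hδ : 0 < δ)
    (heq : ξ ^ (δ ^ (2 / α) - 1) + ξ ^ (2 ^ ((α - 2) / α) * δ ^ (2 / α) - 1) = 2) :
    2 ^ ((2 - α) / 2) ≤ δ ∧ δ ≤ 1 := by
  have hα0 : 0 < α := by linarith
  have hz : 0 < 2 / α := by positivity
  constructor
  · by_contra h
    push_neg at h
    -- δ < 2^((2-α)/2), derive both powers > 1, sum > 2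
    have ht : δ ^ (2 / α) < (2 : ℝ) ^ ((2 - α) / 2 * (2 / α)) := by
      have := Real.rpow_lt_rpow hδ.le h hz
      rwa [← Real.rpow_mul (by norm_num : (0:ℝ) ≤ 2)] at this
    have ht' : δ ^ (2 / α) < (2 : ℝ) ^ ((2 - α) / α) := by
      have : (2 - α) / 2 * (2 / α) = (2 - α) / α := by field_simp
      rwa [this] at ht
    have hct : 2 ^ ((α - 2) / α) * δ ^ (2 / α) < 1 := by
      have h2 : (0:ℝ) < 2 ^ ((α - 2) / α) := Real.rpow_pos_of_pos (by norm_num) _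
      calc 2 ^ ((α - 2) / α) * δ ^ (2 / α)
          < 2 ^ ((α - 2) / α) * 2 ^ ((2 - α) / α) := by nlinarith
        _ = (2:ℝ) ^ ((α - 2) / α + (2 - α) / α) := (Real.rpow_add (by norm_num) _ _).symm
        _ = 1 := by rw [show (α - 2) / α + (2 - α) / α = 0 by field_simp; ring, Real.rpow_zero]
    have ht1 : δ ^ (2 / α) < 1 := by
      have : (2:ℝ) ^ ((2 - α) / α) < 1 :=
        Real.rpow_lt_one_of_one_lt_of_neg (by norm_num) (by
          apply div_neg_of_neg_of_pos <;> linarith)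
      linarith
    have h1 : 1 < ξ ^ (δ ^ (2 / α) - 1) :=
      (Real.one_lt_rpow_iff_of_pos hξ0).mpr (Or.inr ⟨hξ1, by linarith⟩)
    have h2 : 1 < ξ ^ (2 ^ ((α - 2) / α) * δ ^ (2 / α) - 1) :=
      (Real.one_lt_rpow_iff_of_pos hξ0).mpr (Or.inr ⟨hξ1, by linarith⟩)
    linarith
  · by_contra h
    push_neg at h
    have ht : 1 < δ ^ (2 / α) :=
      (Real.one_lt_rpow_iff_of_pos hδ).mpr (Or.inl ⟨h, hz⟩)
    have hc : 1 < (2:ℝ) ^ ((α - 2) / α) :=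
      (Real.one_lt_rpow_iff_of_pos (by norm_num)).mpr (Or.inl ⟨by norm_num, by apply div_pos <;> linarith⟩)
    have hct : 1 < 2 ^ ((α - 2) / α) * δ ^ (2 / α) := by nlinarith
    have h1 : ξ ^ (δ ^ (2 / α) - 1) < 1 :=
      Real.rpow_lt_one hξ0.le hξ1 (by linarith)
    have h2 : ξ ^ (2 ^ ((α - 2) / α) * δ ^ (2 / α) - 1) < 1 :=
      Real.rpow_lt_one hξ0.le hξ1 (by linarith)
    linarith
end

section
/- Let α > 2, χ > 0, c₂ ∈ (0,1], s > 0, and set ξ = exp(−χ c₂ s^{2/α}) ∈ (0,1). Define f(δ) = ξ^{δ^{2/α}−1} + ξ^{2^{(α−2)/α} δ^{2/α} − 1} for δ > 0. Then f is strictly decreasing, f(2^{(2−α)/2}) ≥ 2 and f(1) ≤ 2; hence there exists a unique δ* ∈ [2^{(2−α)/2}, 1] with f(δ*) = 2. -/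
open Real

/-- Existence and uniqueness of the fair-coexistence power budget `δ*`. -/
theorem delta_star_exists_unique (α χ c₂ s : ℝ) (hα : 2 < α) (hχ : 0 < χ)
    (hc₂0 : 0 < c₂) (hc₂1 : c₂ ≤ 1) (hs : 0 < s) :
    let ξ : ℝ := Real.exp (-χ * c₂ * s ^ (2 / α))
    let f : ℝ → ℝ := fun δ =>
      ξ ^ (δ ^ (2 / α) - 1) + ξ ^ (2 ^ ((α - 2) / α) * δ ^ (2 / α) - 1)
    ξ ∈ Set.Ioo (0 : ℝ) 1 ∧
    StrictAntiOn f (Set.Ioi 0) ∧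
    2 ≤ f (2 ^ ((2 - α) / 2)) ∧
    f 1 ≤ 2 ∧
    ∃! δ : ℝ, δ ∈ Set.Icc ((2 : ℝ) ^ ((2 - α) / 2)) 1 ∧ f δ = 2 := by
  intro ξ f
  have hα0 : (0:ℝ) < α := by linarith
  have hαne : α ≠ 0 := ne_of_gt hα0
  have hp : (0:ℝ) < 2 / α := by positivity
  have hξ0 : 0 < ξ := Real.exp_pos _
  have hξ1 : ξ < 1 := by
    have hsp : 0 < s ^ (2 / α) := Real.rpow_pos_of_pos hs _
    have : -χ * c₂ * s ^ (2 / α) < 0 := by nlinarith [mul_pos (mul_pos hχ hc₂0) hsp]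
    exact Real.exp_lt_one_iff.mpr this
  have hξmem : ξ ∈ Set.Ioo (0:ℝ) 1 := ⟨hξ0, hξ1⟩
  have hc : (0:ℝ) < 2 ^ ((α - 2) / α) := Real.rpow_pos_of_pos two_pos _
  -- strict antitonicity
  have hanti : StrictAntiOn f (Set.Ioi 0) := by
    intro a ha b hb hab
    have ha0 : (0:ℝ) < a := ha
    have h1 : a ^ (2 / α) < b ^ (2 / α) := Real.rpow_lt_rpow ha0.le hab hp
    have e1 : ξ ^ (b ^ (2 / α) - 1) < ξ ^ (a ^ (2 / α) - 1) :=
      Real.rpow_lt_rpow_of_exponent_gt hξ0 hξ1 (by linarith)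
    have e2 : ξ ^ (2 ^ ((α - 2) / α) * b ^ (2 / α) - 1) <
        ξ ^ (2 ^ ((α - 2) / α) * a ^ (2 / α) - 1) :=
      Real.rpow_lt_rpow_of_exponent_gt hξ0 hξ1 (by nlinarith)
    simpa [f] using add_lt_add e1 e2
  -- δ₀ and its properties
  set δ₀ : ℝ := (2:ℝ) ^ ((2 - α) / 2) with hδ₀def
  have hδ₀pos : 0 < δ₀ := Real.rpow_pos_of_pos two_pos _
  have hδ₀le1 : δ₀ ≤ 1 :=
    Real.rpow_le_one_of_one_le_of_nonpos one_le_two (by linarith)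
  have hδ₀pow : δ₀ ^ (2 / α) = (2:ℝ) ^ ((2 - α) / α) := by
    rw [hδ₀def, ← Real.rpow_mul (by norm_num : (0:ℝ) ≤ 2)]
    congr 1
    field_simp
  have hprod : (2:ℝ) ^ ((α - 2) / α) * (2:ℝ) ^ ((2 - α) / α) = 1 := by
    rw [← Real.rpow_add two_pos, show (α - 2) / α + (2 - α) / α = 0 by field_simp; ring, Real.rpow_zero]
  -- f δ₀ ≥ 2
  have hfδ₀ : 2 ≤ f δ₀ := by
    have he : f δ₀ = ξ ^ ((2:ℝ) ^ ((2 - α) / α) - 1) + 1 := by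
      simp only [f, hδ₀pow, hprod, sub_self, Real.rpow_zero]
    have hx : (2:ℝ) ^ ((2 - α) / α) ≤ 1 :=
      Real.rpow_le_one_of_one_le_of_nonpos one_le_two
        (div_nonpos_iff.mpr (Or.inr ⟨by linarith, hα0.le⟩))
    have : (1:ℝ) ≤ ξ ^ ((2:ℝ) ^ ((2 - α) / α) - 1) := by
      have := Real.rpow_le_rpow_of_exponent_ge hξ0 hξ1.le
        (show (2:ℝ) ^ ((2 - α) / α) - 1 ≤ 0 by linarith)
      simpa using this
    rw [he]; linarith
  -- f 1 ≤ 2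
  have hf1 : f 1 ≤ 2 := by
    have he : f 1 = 1 + ξ ^ ((2:ℝ) ^ ((α - 2) / α) - 1) := by
      simp only [f, Real.one_rpow, mul_one, sub_self, Real.rpow_zero]
    have hx : (1:ℝ) ≤ (2:ℝ) ^ ((α - 2) / α) :=
      Real.one_le_rpow one_le_two (by apply div_nonneg <;> linarith)
    have : ξ ^ ((2:ℝ) ^ ((α - 2) / α) - 1) ≤ 1 := by
      have := Real.rpow_le_rpow_of_exponent_ge hξ0 hξ1.le
        (show (0:ℝ) ≤ (2:ℝ) ^ ((α - 2) / α) - 1 by linarith)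
      simpa using this
    rw [he]; linarith
  refine ⟨hξmem, hanti, hfδ₀, hf1, ?_⟩
  -- continuity of f on Icc δ₀ 1
  have hcont : ContinuousOn f (Set.Icc δ₀ 1) := by
    have hrp : ContinuousOn (fun δ : ℝ => δ ^ (2 / α)) (Set.Icc δ₀ 1) := by
      intro x hx
      exact ((Real.continuousAt_rpow_const x (2/α) (Or.inl (by
        have := hx.1; exact ne_of_gt (lt_of_lt_of_le hδ₀pos this)))).continuousWithinAt)
    have hbase : Continuous (fun y : ℝ => ξ ^ y) :=
      continuous_iff_continuousAt.mpr fun _ => Real.continuousAt_const_rpow hξ0.ne'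
    have h1 : ContinuousOn (fun δ : ℝ => ξ ^ (δ ^ (2 / α) - 1)) (Set.Icc δ₀ 1) :=
      hbase.comp_continuousOn (hrp.sub continuousOn_const)
    have h2 : ContinuousOn (fun δ : ℝ => ξ ^ (2 ^ ((α - 2) / α) * δ ^ (2 / α) - 1))
        (Set.Icc δ₀ 1) :=
      hbase.comp_continuousOn ((continuousOn_const.mul hrp).sub continuousOn_const)
    exact h1.add h2
  have hsub : Set.Icc δ₀ 1 ⊆ Set.Ioi (0:ℝ) := fun x hx =>
    lt_of_lt_of_le hδ₀pos hx.1
  have hmem2 : (2:ℝ) ∈ f '' Set.Icc δ₀ 1 := by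
    have := intermediate_value_Icc' hδ₀le1 hcont
    exact this ⟨hf1, hfδ₀⟩
  obtain ⟨δstar, hδmem, hfδ⟩ := hmem2
  refine ⟨δstar, ⟨hδmem, hfδ⟩, ?_⟩
  rintro y ⟨hy, hfy⟩
  exact hanti.injOn (hsub hy) (hsub hδmem) (hfy.trans hfδ.symm)
end
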